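/- Let φ : ℝ → ℝ be a Schwartz function and let C_𝔣 > 0 satisfy 1/C_𝔣 = ∫_ℝ (1 − cos(2πz))/|z|^{3/2} dz. Then there exists a constant C > 0 (depending on φ) such that for all x ∈ ℝ, |C_𝔣·∫_ℝ (φ(x) − φ(x−z))/|z|^{3/2} dz| ≤ C·(1+x²)^{−3/4}. -/

import Mathlib

open MeasureTheory Set

namespace Stmt12Aux

lemma aesm_abs_rpow (a : ℝ) :
    AEStronglyMeasurable (fun z : ℝ => |z| ^ a) (volume : Measure ℝ) := by
  have hmeas : Measurable fun z : ℝ => Real.exp (Real.log |z| * a) :=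
    ((Real.measurable_log.comp measurable_abs).mul_const a).exp
  refine hmeas.aestronglyMeasurable.congr ?_
  have hne : ∀ᵐ z : ℝ, z ≠ 0 := by
    rw [ae_iff]
    simp only [not_not]
    simpa [Set.setOf_eq_eq_singleton] using (measure_singleton (0:ℝ))
  filter_upwards [hne] with z hz
  rw [Real.rpow_def_of_pos (abs_pos.mpr hz)]

lemma rpow_anti {a b : ℝ} (ha : 0 < a) (hab : a ≤ b) {c : ℝ} (hc : 0 ≤ c) :
    b ^ (-c) ≤ a ^ (-c) := by
  rw [Real.rpow_neg (ha.le.trans hab), Real.rpow_neg ha.le]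
  exact inv_anti₀ (Real.rpow_pos_of_pos ha c) (Real.rpow_le_rpow ha.le hab hc)

lemma sq_rpow {y : ℝ} (hy : 0 ≤ y) (c : ℝ) : (y ^ 2) ^ c = y ^ (2 * c) := by
  rw [← Real.rpow_natCast y 2, ← Real.rpow_mul hy]
  norm_num

lemma intOn_abs_rpow_Icc {R : ℝ} (hR : 0 < R) {a : ℝ} (ha : -1 < a) :
    IntegrableOn (fun z : ℝ => |z| ^ a) (Icc (-R) R) := by
  have h1 : IntegrableOn (fun z : ℝ => z ^ a) (Ioc 0 R) := by
    have h := intervalIntegral.intervalIntegrable_rpow' (a := 0) (b := R) ha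
    rwa [intervalIntegrable_iff_integrableOn_Ioc_of_le hR.le] at h
  have h1' : IntegrableOn (fun z : ℝ => |z| ^ a) (Ioc 0 R) :=
    h1.congr_fun (fun z hz => by rw [abs_of_pos hz.1]) measurableSet_Ioc
  have h2 : IntegrableOn (fun z : ℝ => |z| ^ a) (Ico (-R) 0) := by
    have key := (Measure.measurePreserving_neg (volume : Measure ℝ)).integrableOn_comp_preimage
      (Homeomorph.neg ℝ).measurableEmbedding (f := fun z : ℝ => |z| ^ a) (s := Ioc 0 R)
    simp only [Function.comp_def, abs_neg, neg_preimage, neg_Ioc,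
      neg_zero] at key
    exact key.mpr h1'
  have h3 : IntegrableOn (fun z : ℝ => |z| ^ a) (Icc 0 R) :=
    by rw [integrableOn_Icc_iff_integrableOn_Ioc]; exact h1'
  refine (h2.union h3).mono_set ?_
  intro z hz
  rcases lt_or_ge z 0 with h | h
  · exact Or.inl ⟨hz.1, h⟩
  · exact Or.inr ⟨h, hz.2⟩

lemma intOn_abs_rpow_tail {R : ℝ} (hR : 0 < R) {a : ℝ} (ha : a < -1) :
    IntegrableOn (fun z : ℝ => |z| ^ a) (Iio (-R) ∪ Ioi R) := by
  have h1 : IntegrableOn (fun z : ℝ => |z| ^ a) (Ioi R) :=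
    (integrableOn_Ioi_rpow_of_lt ha hR).congr_fun
      (fun z hz => by rw [abs_of_pos (hR.trans hz)]) measurableSet_Ioi
  have h2 : IntegrableOn (fun z : ℝ => |z| ^ a) (Iio (-R)) := by
    have key := (Measure.measurePreserving_neg (volume : Measure ℝ)).integrableOn_comp_preimage
      (Homeomorph.neg ℝ).measurableEmbedding (f := fun z : ℝ => |z| ^ a) (s := Ioi R)
    simp only [Function.comp_def, abs_neg, neg_preimage, neg_Ioi] at key
    exact key.mpr h1
  exact h2.union h1

lemma int_abs_rpow_Icc {R : ℝ} (hR : 0 < R) :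
    ∫ z in Icc (-R) R, |z| ^ (-(1:ℝ)/2) = 4 * R ^ ((1:ℝ)/2) := by
  have ha : (-1:ℝ) < -(1:ℝ)/2 := by norm_num
  have hIcc := intOn_abs_rpow_Icc hR ha
  have hInt : IntervalIntegrable (fun z : ℝ => |z| ^ (-(1:ℝ)/2)) volume 0 R := by
    rw [intervalIntegrable_iff_integrableOn_Ioc_of_le hR.le]
    exact hIcc.mono_set (fun z hz => ⟨by linarith [hz.1], hz.2⟩)
  have hIntNeg : IntervalIntegrable (fun z : ℝ => |z| ^ (-(1:ℝ)/2)) volume (-R) 0 := by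
    rw [intervalIntegrable_iff_integrableOn_Ioc_of_le (by linarith)]
    exact hIcc.mono_set (fun z hz => ⟨hz.1.le, by linarith [hz.2]⟩)
  have hneg : ∫ z in (-R)..(0:ℝ), |z| ^ (-(1:ℝ)/2) = ∫ z in (0:ℝ)..R, |z| ^ (-(1:ℝ)/2) := by
    have h := intervalIntegral.integral_comp_neg (a := 0) (b := R)
      (fun z : ℝ => |z| ^ (-(1:ℝ)/2))
    simpa [abs_neg, neg_zero] using h.symm
  have hpos : ∫ z in (0:ℝ)..R, |z| ^ (-(1:ℝ)/2) = 2 * R ^ ((1:ℝ)/2) := by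
    have hcg : ∫ z in (0:ℝ)..R, |z| ^ (-(1:ℝ)/2) = ∫ z in (0:ℝ)..R, z ^ (-(1:ℝ)/2) := by
      apply intervalIntegral.integral_congr
      intro z hz
      rw [uIcc_of_le hR.le] at hz
      show |z| ^ (-(1:ℝ)/2) = z ^ (-(1:ℝ)/2)
      rw [abs_of_nonneg hz.1]
    rw [hcg, integral_rpow (Or.inl ha),
      show (-(1:ℝ)/2 + 1) = (1:ℝ)/2 by norm_num,
      Real.zero_rpow (by norm_num : ((1:ℝ)/2) ≠ 0)]
    ring
  calc ∫ z in Icc (-R) R, |z| ^ (-(1:ℝ)/2)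
      = ∫ z in Ioc (-R) R, |z| ^ (-(1:ℝ)/2) := integral_Icc_eq_integral_Ioc
    _ = ∫ z in (-R)..R, |z| ^ (-(1:ℝ)/2) :=
        (intervalIntegral.integral_of_le (by linarith)).symm
    _ = (∫ z in (-R)..(0:ℝ), |z| ^ (-(1:ℝ)/2)) + ∫ z in (0:ℝ)..R, |z| ^ (-(1:ℝ)/2) :=
        (intervalIntegral.integral_add_adjacent_intervals hIntNeg hInt).symm
    _ = 4 * R ^ ((1:ℝ)/2) := by rw [hneg, hpos]; ring

lemma int_abs_rpow_tail {R : ℝ} (hR : 0 < R) :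
    ∫ z in Iio (-R) ∪ Ioi R, |z| ^ (-(3:ℝ)/2) = 4 * R ^ (-(1:ℝ)/2) := by
  have ha : (-(3:ℝ)/2) < -1 := by norm_num
  have htail := intOn_abs_rpow_tail hR ha
  have h1 : IntegrableOn (fun z : ℝ => |z| ^ (-(3:ℝ)/2)) (Ioi R) :=
    htail.mono_set subset_union_right
  have h2 : IntegrableOn (fun z : ℝ => |z| ^ (-(3:ℝ)/2)) (Iio (-R)) :=
    htail.mono_set subset_union_left
  have hIoi : ∫ z in Ioi R, |z| ^ (-(3:ℝ)/2) = 2 * R ^ (-(1:ℝ)/2) := by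
    rw [setIntegral_congr_fun measurableSet_Ioi
      (g := fun z : ℝ => z ^ (-(3:ℝ)/2)) (fun z hz => by
        show |z| ^ (-(3:ℝ)/2) = z ^ (-(3:ℝ)/2)
        rw [abs_of_pos (hR.trans hz)])]
    rw [integral_Ioi_rpow_of_lt ha hR, show (-(3:ℝ)/2 + 1) = (-(1:ℝ)/2) by norm_num]
    field_simp
  have hIio : ∫ z in Iio (-R), |z| ^ (-(3:ℝ)/2) = ∫ z in Ioi R, |z| ^ (-(3:ℝ)/2) := by
    calc ∫ z in Iio (-R), |z| ^ (-(3:ℝ)/2)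
        = ∫ z in Iic (-R), |z| ^ (-(3:ℝ)/2) := setIntegral_congr_set Iio_ae_eq_Iic
      _ = ∫ z in Ioi R, |z| ^ (-(3:ℝ)/2) := by
          have h := integral_comp_neg_Ioi R (fun z : ℝ => |z| ^ (-(3:ℝ)/2))
          simpa [abs_neg] using h.symm
  have hdisj : Disjoint (Iio (-R)) (Ioi R) := by
    rw [Set.disjoint_left]
    intro z hz hz'
    simp only [mem_Iio, mem_Ioi] at hz hz'
    linarith
  rw [setIntegral_union hdisj measurableSet_Ioi h2 h1, hIio, hIoi]
  ring

lemma schwartz_decay_bound (ψ : SchwartzMap ℝ ℝ) :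
    ∃ D : ℝ, 0 < D ∧ ∀ y : ℝ, (1 + y ^ 2) * |ψ y| ≤ D := by
  obtain ⟨C2, hC2pos, hC2⟩ := ψ.decay 2 0
  obtain ⟨C0, hC0pos, hC0⟩ := ψ.decay 0 0
  refine ⟨C0 + C2, by positivity, fun y => ?_⟩
  have h2 := hC2 y
  have h0 := hC0 y
  simp only [norm_iteratedFDeriv_zero, Real.norm_eq_abs, pow_zero, one_mul] at h2 h0
  nlinarith [sq_abs y, abs_nonneg (ψ y)]

end Stmt12Aux

set_option maxHeartbeats 1000000 in
/-- Decay of the `1/2`-fractional derivative (in singular-integral form) of a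
Schwartz function: `|(√𝔇 φ)(x)| ≲ ⟨x⟩^{-3/2}`. -/
theorem stmt_12 (φ : SchwartzMap ℝ ℝ) (Cf : ℝ) (hCf : 0 < Cf)
    (hCfdef : 1 / Cf = ∫ z : ℝ, (1 - Real.cos (2 * Real.pi * z)) / |z| ^ ((3:ℝ)/2)) :
    ∃ C > (0:ℝ), ∀ x : ℝ,
      |Cf * ∫ z : ℝ, (φ x - φ (x - z)) / |z| ^ ((3:ℝ)/2)|
        ≤ C * (1 + x ^ 2) ^ (-(3:ℝ)/4) := by
  classical
  obtain ⟨D1, hD1pos, hD1⟩ := Stmt12Aux.schwartz_decay_bound (SchwartzMap.derivCLM ℝ ℝ φ)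
  obtain ⟨D0, hD0pos, hD0⟩ := Stmt12Aux.schwartz_decay_bound φ
  simp only [SchwartzMap.derivCLM_apply] at hD1
  set L : ℝ := ∫ y : ℝ, |φ y| with hLdef
  have hLnn : 0 ≤ L := integral_nonneg fun y => abs_nonneg _
  refine ⟨Cf * (16 * D1 + 8 * D0 + 8 * L), by positivity, fun x => ?_⟩
  set t : ℝ := 1 + x ^ 2 with htdef
  have ht0 : (0:ℝ) < t := by positivity
  have ht1 : (1:ℝ) ≤ t := by nlinarith [sq_nonneg x]
  set r : ℝ := t ^ ((1:ℝ)/4) with hrdef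
  have hr0 : (0:ℝ) < r := Real.rpow_pos_of_pos ht0 _
  have hr1 : (1:ℝ) ≤ r := Real.one_le_rpow ht1 (by norm_num)
  have hr4 : r ^ (4:ℕ) = t := by
    rw [hrdef, ← Real.rpow_natCast (t ^ ((1:ℝ)/4)) 4, ← Real.rpow_mul ht0.le]
    norm_num
  set R : ℝ := r ^ 2 / 2 with hRdef
  have hR0 : (0:ℝ) < R := by positivity
  -- derivative bound on the window
  have hderiv : ∀ y ∈ Icc (x - R) (x + R), ‖deriv (⇑φ) y‖ ≤ 4 * D1 / t := by
    intro y hy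
    have hyx : (y - x) ^ 2 ≤ R ^ 2 := by nlinarith [hy.1, hy.2]
    have hRsq : R ^ 2 = t / 4 := by
      rw [hRdef, ← hr4]; ring
    have hty : t ≤ 4 * (1 + y ^ 2) := by nlinarith
    have hb := hD1 y
    rw [Real.norm_eq_abs, le_div_iff₀ ht0]
    nlinarith [abs_nonneg (deriv (⇑φ) y)]
  have hMVT : ∀ z ∈ Icc (-R) R, |φ x - φ (x - z)| ≤ (4 * D1 / t) * |z| := by
    intro z hz
    have hx1 : x ∈ Icc (x - R) (x + R) := ⟨by linarith, by linarith⟩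
    have hx2 : x - z ∈ Icc (x - R) (x + R) := ⟨by linarith [hz.2], by linarith [hz.1]⟩
    have h := Convex.norm_image_sub_le_of_norm_deriv_le (fun y _ => φ.differentiableAt)
      hderiv (convex_Icc _ _) hx2 hx1
    simpa [Real.norm_eq_abs, sub_sub_cancel] using h
  have hs1m : MeasurableSet (Icc (-R) R) := measurableSet_Icc
  have hs2m : MeasurableSet (Iio (-R) ∪ Ioi R) := measurableSet_Iio.union measurableSet_Ioi
  have hmem : ∀ z : ℝ, z ∉ Icc (-R) R → z ∈ Iio (-R) ∪ Ioi R := by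
    intro z hz
    rw [Set.mem_Icc, not_and_or, not_le, not_le] at hz
    rcases hz with h | h
    · exact Or.inl h
    · exact Or.inr h
  have hnotmem : ∀ z : ℝ, z ∈ Icc (-R) R → z ∉ Iio (-R) ∪ Ioi R := by
    intro z hz hz2
    rcases hz2 with h | h
    · exact absurd hz.1 (not_le.mpr h)
    · exact absurd hz.2 (not_le.mpr h)
  -- majorant
  set g : ℝ → ℝ := fun z =>
    (Icc (-R) R).indicator (fun z => (4 * D1 / t) * |z| ^ (-(1:ℝ)/2)) z
      + (Iio (-R) ∪ Ioi R).indicator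
          (fun z => (|φ x| + |φ (x - z)|) * |z| ^ (-(3:ℝ)/2)) z with hgdef
  -- integrabilities
  have hI1 : IntegrableOn (fun z : ℝ => (4 * D1 / t) * |z| ^ (-(1:ℝ)/2)) (Icc (-R) R) :=
    (Stmt12Aux.intOn_abs_rpow_Icc hR0 (by norm_num)).const_mul _
  have htail : IntegrableOn (fun z : ℝ => |z| ^ (-(3:ℝ)/2)) (Iio (-R) ∪ Ioi R) :=
    Stmt12Aux.intOn_abs_rpow_tail hR0 (by norm_num)
  have hI2 : IntegrableOn (fun z : ℝ => |φ x| * |z| ^ (-(3:ℝ)/2)) (Iio (-R) ∪ Ioi R) :=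
    htail.const_mul _
  have hRneg : ∀ z : ℝ, z ∈ Iio (-R) ∪ Ioi R →
      |z| ^ (-(3:ℝ)/2) ≤ R ^ (-(3:ℝ)/2) := by
    intro z hz
    have hzR : R ≤ |z| := by
      rcases hz with h | h
      · simp only [mem_Iio] at h
        rw [abs_of_neg (by linarith)]
        linarith
      · simp only [mem_Ioi] at h
        rw [abs_of_pos (hR0.trans h)]
        exact h.le
    have h := Stmt12Aux.rpow_anti hR0 hzR (c := (3:ℝ)/2) (by norm_num)
    simpa [neg_div] using h
  have hmaj : Integrable (fun z : ℝ => |φ (x - z)| * R ^ (-(3:ℝ)/2)) volume :=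
    ((φ.integrable (μ := volume)).abs.comp_sub_left x).mul_const _
  have hI3 : IntegrableOn (fun z : ℝ => |φ (x - z)| * |z| ^ (-(3:ℝ)/2))
      (Iio (-R) ∪ Ioi R) := by
    refine Integrable.mono' hmaj.integrableOn ?_ ?_
    · exact (((φ.continuous.comp (continuous_const.sub continuous_id)).abs.aestronglyMeasurable).mul
        (Stmt12Aux.aesm_abs_rpow _)).restrict
    · filter_upwards [ae_restrict_mem hs2m] with z hz
      rw [Real.norm_eq_abs,
        abs_of_nonneg (mul_nonneg (abs_nonneg _) (Real.rpow_nonneg (abs_nonneg _) _))]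
      exact mul_le_mul_of_nonneg_left (hRneg z hz) (abs_nonneg _)
  have hI23 : IntegrableOn (fun z : ℝ => (|φ x| + |φ (x - z)|) * |z| ^ (-(3:ℝ)/2))
      (Iio (-R) ∪ Ioi R) := by
    have h := hI2.add hI3
    have heq : (fun z : ℝ => (|φ x| + |φ (x - z)|) * |z| ^ (-(3:ℝ)/2))
        = (fun z : ℝ => |φ x| * |z| ^ (-(3:ℝ)/2))
          + fun z : ℝ => |φ (x - z)| * |z| ^ (-(3:ℝ)/2) := by
      funext z
      simp only [Pi.add_apply]
      ring
    rwa [heq]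
  have hIg1 : Integrable ((Icc (-R) R).indicator
      (fun z : ℝ => (4 * D1 / t) * |z| ^ (-(1:ℝ)/2))) volume :=
    (integrable_indicator_iff hs1m).mpr hI1
  have hIg2 : Integrable ((Iio (-R) ∪ Ioi R).indicator
      (fun z : ℝ => (|φ x| + |φ (x - z)|) * |z| ^ (-(3:ℝ)/2))) volume :=
    (integrable_indicator_iff hs2m).mpr hI23
  have hIg : Integrable g volume := by
    rw [hgdef]
    exact hIg1.add hIg2
  -- pointwise bound
  have hpt : ∀ z : ℝ, ‖(φ x - φ (x - z)) / |z| ^ ((3:ℝ)/2)‖ ≤ g z := by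
    intro z
    rw [Real.norm_eq_abs]
    simp only [hgdef]
    by_cases hz : z ∈ Icc (-R) R
    · rw [Set.indicator_of_mem hz, Set.indicator_of_notMem (hnotmem z hz), add_zero]
      by_cases hz0 : z = 0
      · subst hz0
        simp only [sub_zero, sub_self, abs_zero,
          Real.zero_rpow (by norm_num : ((3:ℝ)/2) ≠ 0), div_zero,
          Real.zero_rpow (by norm_num : (-(1:ℝ)/2) ≠ 0), mul_zero, le_refl]
      · have habs : (0:ℝ) < |z| := abs_pos.mpr hz0
        have hpw : (0:ℝ) < |z| ^ ((3:ℝ)/2) := Real.rpow_pos_of_pos habs _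
        rw [abs_div, abs_of_pos hpw, div_le_iff₀ hpw]
        calc |φ x - φ (x - z)| ≤ (4 * D1 / t) * |z| := hMVT z hz
          _ = (4 * D1 / t) * |z| ^ (-(1:ℝ)/2) * |z| ^ ((3:ℝ)/2) := by
              rw [mul_assoc, ← Real.rpow_add habs]
              norm_num
    · rw [Set.indicator_of_notMem hz, Set.indicator_of_mem (hmem z hz), zero_add]
      have hzR : R < |z| := by
        rcases hmem z hz with h | h
        · simp only [mem_Iio] at h
          rw [abs_of_neg (by linarith)]; linarith
        · simp only [mem_Ioi] at h
          rw [abs_of_pos (hR0.trans h)]; exact h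
      have habs : (0:ℝ) < |z| := hR0.trans hzR
      have hpw : (0:ℝ) < |z| ^ ((3:ℝ)/2) := Real.rpow_pos_of_pos habs _
      rw [abs_div, abs_of_pos hpw, div_le_iff₀ hpw]
      have htri : |φ x - φ (x - z)| ≤ |φ x| + |φ (x - z)| := abs_sub _ _
      calc |φ x - φ (x - z)| ≤ |φ x| + |φ (x - z)| := htri
        _ = (|φ x| + |φ (x - z)|) * |z| ^ (-(3:ℝ)/2) * |z| ^ ((3:ℝ)/2) := by
            rw [mul_assoc, ← Real.rpow_add habs]
            norm_num
  have key : ‖∫ z : ℝ, (φ x - φ (x - z)) / |z| ^ ((3:ℝ)/2)‖ ≤ ∫ z : ℝ, g z :=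
    norm_integral_le_of_norm_le hIg (Filter.Eventually.of_forall hpt)
  -- value of the majorant's integral
  have hgval : ∫ z : ℝ, g z
      = (4 * D1 / t) * (4 * R ^ ((1:ℝ)/2))
        + (|φ x| * (4 * R ^ (-(1:ℝ)/2))
            + ∫ z in Iio (-R) ∪ Ioi R, |φ (x - z)| * |z| ^ (-(3:ℝ)/2)) := by
    simp only [hgdef]
    rw [integral_add hIg1 hIg2, integral_indicator hs1m, integral_indicator hs2m]
    congr 1
    · rw [integral_const_mul, Stmt12Aux.int_abs_rpow_Icc hR0]
    · have hsplit : ∫ z in Iio (-R) ∪ Ioi R, (|φ x| + |φ (x - z)|) * |z| ^ (-(3:ℝ)/2)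
          = (∫ z in Iio (-R) ∪ Ioi R, |φ x| * |z| ^ (-(3:ℝ)/2))
            + ∫ z in Iio (-R) ∪ Ioi R, |φ (x - z)| * |z| ^ (-(3:ℝ)/2) := by
        rw [← integral_add hI2 hI3]
        exact setIntegral_congr_fun hs2m (fun z _ => by ring)
      rw [hsplit, integral_const_mul, Stmt12Aux.int_abs_rpow_tail hR0]
  -- bounds for each term
  have e1 : R ^ ((1:ℝ)/2) ≤ r := by
    have h1 : R ≤ r ^ 2 := by rw [hRdef]; nlinarith
    have h2 : R ^ ((1:ℝ)/2) ≤ (r ^ 2) ^ ((1:ℝ)/2) :=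
      Real.rpow_le_rpow hR0.le h1 (by norm_num)
    rwa [Stmt12Aux.sq_rpow hr0.le, show (2:ℝ) * ((1:ℝ)/2) = 1 by norm_num,
      Real.rpow_one] at h2
  have hq : ((r/2) ^ 2 : ℝ) ≤ R := by rw [hRdef]; nlinarith
  have e2 : R ^ (-(1:ℝ)/2) ≤ 2 / r := by
    calc R ^ (-(1:ℝ)/2) ≤ ((r/2) ^ 2) ^ (-(1:ℝ)/2) := by
          have h := Stmt12Aux.rpow_anti (show (0:ℝ) < (r/2) ^ 2 by positivity) hq
            (c := (1:ℝ)/2) (by norm_num)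
          simpa [neg_div] using h
      _ = 2 / r := by
          rw [Stmt12Aux.sq_rpow (by positivity : (0:ℝ) ≤ r/2),
            show (2:ℝ) * (-(1:ℝ)/2) = ((-1 : ℤ) : ℝ) by norm_num, Real.rpow_intCast]
          rw [zpow_neg, zpow_one, inv_div]
  have e3 : R ^ (-(3:ℝ)/2) ≤ 8 / r ^ 3 := by
    calc R ^ (-(3:ℝ)/2) ≤ ((r/2) ^ 2) ^ (-(3:ℝ)/2) := by
          have h := Stmt12Aux.rpow_anti (show (0:ℝ) < (r/2) ^ 2 by positivity) hq
            (c := (3:ℝ)/2) (by norm_num)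
          simpa [neg_div] using h
      _ = 8 / r ^ 3 := by
          rw [Stmt12Aux.sq_rpow (by positivity : (0:ℝ) ≤ r/2),
            show (2:ℝ) * (-(3:ℝ)/2) = -(3:ℝ) by norm_num,
            Real.rpow_neg (by positivity : (0:ℝ) ≤ r/2),
            show (3:ℝ) = ((3:ℕ) : ℝ) by norm_num,
            Real.rpow_natCast, div_pow, inv_div]
          norm_num
  have hb1 : (4 * D1 / t) * (4 * R ^ ((1:ℝ)/2)) ≤ 16 * D1 * (r / t) := by
    have h := mul_le_mul_of_nonneg_left e1 (by positivity : (0:ℝ) ≤ 4 * D1 / t)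
    calc (4 * D1 / t) * (4 * R ^ ((1:ℝ)/2)) = 4 * ((4 * D1 / t) * R ^ ((1:ℝ)/2)) := by ring
      _ ≤ 4 * ((4 * D1 / t) * r) := by linarith
      _ = 16 * D1 * (r / t) := by ring
  have hφx : |φ x| ≤ D0 / t := by
    have h := hD0 x
    rw [← htdef] at h
    rw [le_div_iff₀ ht0]
    nlinarith [abs_nonneg (φ x)]
  have hfrac : 1 / (t * r) ≤ r / t := by
    rw [div_le_div_iff₀ (by positivity) ht0]
    nlinarith
  have hb2 : |φ x| * (4 * R ^ (-(1:ℝ)/2)) ≤ 8 * D0 * (r / t) := by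
    have h1 : |φ x| * (4 * R ^ (-(1:ℝ)/2)) ≤ (D0 / t) * (4 * (2 / r)) := by
      apply mul_le_mul hφx ?_ (mul_nonneg (by norm_num) (Real.rpow_nonneg hR0.le _))
        (div_nonneg hD0pos.le ht0.le)
      have := mul_le_mul_of_nonneg_left e2 (by norm_num : (0:ℝ) ≤ 4)
      linarith
    have h2 : (D0 / t) * (4 * (2 / r)) = 8 * D0 * (1 / (t * r)) := by
      field_simp
      ring
    have h3 : 8 * D0 * (1 / (t * r)) ≤ 8 * D0 * (r / t) :=
      mul_le_mul_of_nonneg_left hfrac (by positivity)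
    linarith [h1.trans_eq h2]
  have h8 : (8:ℝ) / r ^ 3 = 8 * (r / t) := by
    rw [← hr4]
    field_simp
  have hb3 : (∫ z in Iio (-R) ∪ Ioi R, |φ (x - z)| * |z| ^ (-(3:ℝ)/2)) ≤ 8 * L * (r / t) := by
    have s1 : (∫ z in Iio (-R) ∪ Ioi R, |φ (x - z)| * |z| ^ (-(3:ℝ)/2))
        ≤ ∫ z in Iio (-R) ∪ Ioi R, |φ (x - z)| * R ^ (-(3:ℝ)/2) :=
      setIntegral_mono_on hI3 hmaj.integrableOn hs2m
        (fun z hz => mul_le_mul_of_nonneg_left (hRneg z hz) (abs_nonneg _))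
    have s2 : (∫ z in Iio (-R) ∪ Ioi R, |φ (x - z)| * R ^ (-(3:ℝ)/2))
        ≤ ∫ z : ℝ, |φ (x - z)| * R ^ (-(3:ℝ)/2) :=
      setIntegral_le_integral hmaj (Filter.Eventually.of_forall fun z => by positivity)
    have s3 : (∫ z : ℝ, |φ (x - z)| * R ^ (-(3:ℝ)/2))
        = L * R ^ (-(3:ℝ)/2) := by
      rw [integral_mul_const, hLdef, integral_sub_left_eq_self (fun y : ℝ => |φ y|) volume x]
    have s4 : L * R ^ (-(3:ℝ)/2) ≤ L * (8 / r ^ 3) := mul_le_mul_of_nonneg_left e3 hLnn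
    have s5 : L * (8 / r ^ 3) = 8 * L * (r / t) := by rw [h8]; ring
    linarith [s1.trans (s2.trans_eq s3), s4.trans_eq s5]
  have hT : t ^ (-(3:ℝ)/4) = r / t := by
    rw [show (-(3:ℝ)/4) = (1:ℝ)/4 - 1 by norm_num, Real.rpow_sub ht0, Real.rpow_one, ← hrdef]
  calc |Cf * ∫ z : ℝ, (φ x - φ (x - z)) / |z| ^ ((3:ℝ)/2)|
      = Cf * |∫ z : ℝ, (φ x - φ (x - z)) / |z| ^ ((3:ℝ)/2)| := by
        rw [abs_mul, abs_of_pos hCf]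
    _ ≤ Cf * ((16 * D1 + 8 * D0 + 8 * L) * (r / t)) := by
        apply mul_le_mul_of_nonneg_left ?_ hCf.le
        calc |∫ z : ℝ, (φ x - φ (x - z)) / |z| ^ ((3:ℝ)/2)|
            ≤ ∫ z : ℝ, g z := by rw [← Real.norm_eq_abs]; exact key
          _ = (4 * D1 / t) * (4 * R ^ ((1:ℝ)/2))
              + (|φ x| * (4 * R ^ (-(1:ℝ)/2))
                  + ∫ z in Iio (-R) ∪ Ioi R, |φ (x - z)| * |z| ^ (-(3:ℝ)/2)) := hgval
          _ ≤ 16 * D1 * (r / t) + (8 * D0 * (r / t) + 8 * L * (r / t)) := by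
              exact add_le_add hb1 (add_le_add hb2 hb3)
          _ = (16 * D1 + 8 * D0 + 8 * L) * (r / t) := by ring
    _ = Cf * (16 * D1 + 8 * D0 + 8 * L) * t ^ (-(3:ℝ)/4) := by rw [hT]; ring
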